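/- For any unbounded increasing function h : ℕ → ℝ⁺, the set of subshifts X such that n ≤ c_X(n) ≤ n + h(n) for infinitely many n is residual in the closure 𝒯'‾ of the infinite transitive subshifts. -/

import Mathlib

open Set Topology Filter

namespace Generic

/-- The shift map `σ` on `ℤ → ℤ`, `(σ x) i = x (i+1)`. -/
def shift : (ℤ → ℤ) → (ℤ → ℤ) := fun x i => x (i + 1)

/-- A subshift: a nonempty compact shift-invariant subset of `𝒜^ℤ`
for some finite alphabet `𝒜 ⊂ ℤ` (product topology, `ℤ` discrete). -/
structure Subshift where
  carrier : Set (ℤ → ℤ)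
  nonempty' : carrier.Nonempty
  finite_alphabet : ∃ A : Finset ℤ, ∀ x ∈ carrier, ∀ i : ℤ, x i ∈ A
  shift_invariant : shift '' carrier = carrier
  isCompact' : IsCompact carrier

/-- The finite word `w` occurs in the biinfinite sequence `x`. -/
def Occurs (w : List ℤ) (x : ℤ → ℤ) : Prop :=
  ∃ k : ℤ, ∀ i : Fin w.length, x (k + (i.1 : ℤ)) = w.get i

namespace Subshift

/-- `L_n(X)`: the set of `n`-letter words appearing in points of `X`. -/
def lang (X : Subshift) (n : ℕ) : Set (List ℤ) :=
  {w | w.length = n ∧ ∃ x ∈ X.carrier, ∀ i : Fin w.length, x (i.1 : ℤ) = w.get i}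

/-- The word complexity function `c_X(n) = |L_n(X)|`. -/
noncomputable def complexity (X : Subshift) (n : ℕ) : ℕ := (X.lang n).ncard

/-- `X` is a shift of finite type: for some finite alphabet `A` and finite set `F` of
forbidden words, `X` is the set of all points of `A^ℤ` containing no word of `F`. -/
def IsSFT (X : Subshift) : Prop :=
  ∃ (A : Finset ℤ) (F : Finset (List ℤ)),
    X.carrier = {x | (∀ i : ℤ, x i ∈ A) ∧ ∀ w ∈ F, ¬ Occurs w x}

end Subshift

/-- The cylinder set `[X, n] = {Y : L_n(Y) = L_n(X)}`. -/
def cylinder (X : Subshift) (n : ℕ) : Set Subshift := {Y | Y.lang n = X.lang n}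

/-- The topology of the space `𝐒` of all subshifts: generated by the cylinder sets `[X,n]`;
this is the topology of the metric `d(X,Y) = 2^{-inf{n : L_n(X) ≠ L_n(Y)}}`. -/
instance : TopologicalSpace Subshift :=
  TopologicalSpace.generateFrom {C | ∃ (X : Subshift) (n : ℕ), C = cylinder X n}

/-- A directed (multi)graph: edge set `E`, vertex set `V`, source and target maps. -/
structure Digraph (V : Type*) (E : Type*) where
  src : E → V
  tgt : E → V

namespace Digraph

variable {V E : Type*}

/-- A cycle of length `k`, encoded as a map `ZMod k → E` with matching endpoints. -/
def IsCycle (G : Digraph V E) {k : ℕ} (c : ZMod k → E) : Prop :=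
  0 < k ∧ ∀ i, G.tgt (c i) = G.src (c (i + 1))

/-- The vertex set of a cycle. -/
def cycleVerts (G : Digraph V E) {k : ℕ} (c : ZMod k → E) : Set V :=
  Set.range fun i => G.src (c i)

/-- The cycle `c` has an incoming edge: an edge whose terminal vertex is on the cycle
and whose initial vertex is not. -/
def HasIncoming (G : Digraph V E) {k : ℕ} (c : ZMod k → E) : Prop :=
  ∃ f : E, G.tgt f ∈ G.cycleVerts c ∧ G.src f ∉ G.cycleVerts c

/-- The cycle `c` has an outgoing edge: an edge whose initial vertex is on the cycle
and whose terminal vertex is not. -/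
def HasOutgoing (G : Digraph V E) {k : ℕ} (c : ZMod k → E) : Prop :=
  ∃ g : E, G.src g ∈ G.cycleVerts c ∧ G.tgt g ∉ G.cycleVerts c

/-- No middle cycles property: no cycle has both an incoming and an outgoing edge. -/
def NMC (G : Digraph V E) : Prop :=
  ¬ ∃ (k : ℕ) (c : ZMod k → E), G.IsCycle c ∧ G.HasIncoming c ∧ G.HasOutgoing c

/-- A simple cycle: a cycle visiting no vertex twice. -/
def IsSimpleCycle (G : Digraph V E) {k : ℕ} (c : ZMod k → E) : Prop :=
  G.IsCycle c ∧ Function.Injective fun i => G.src (c i)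

/-- One middle cycle property: there is a unique simple cycle having both an incoming
and an outgoing edge. -/
def OMC (G : Digraph V E) : Prop :=
  ∃ (k : ℕ) (c : ZMod k → E), G.IsSimpleCycle c ∧ G.HasIncoming c ∧ G.HasOutgoing c ∧
    ∀ (k' : ℕ) (c' : ZMod k' → E), G.IsSimpleCycle c' → G.HasIncoming c' → G.HasOutgoing c' →
      Set.range c' = Set.range c

end Digraph

/-- The `n`-th Rauzy graph of `X`: vertices are the `(n-1)`-letter words of `L(X)`
(embedded in `List ℤ`), edges are the `n`-letter words `w ∈ L_n(X)`, with
`src w` the length-`(n-1)` prefix and `tgt w` the length-`(n-1)` suffix. -/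
def rauzyGraph (X : Subshift) (n : ℕ) : Digraph (List ℤ) (X.lang n) :=
  ⟨fun w => w.1.dropLast, fun w => w.1.tail⟩

/-- `X` has the no middle cycles property. -/
def Subshift.IsNMC (X : Subshift) : Prop := ∃ n : ℕ, 1 ≤ n ∧ (rauzyGraph X n).NMC

/-- `X` has the one middle cycle property. -/
def Subshift.IsOMC (X : Subshift) : Prop := ∃ n : ℕ, 1 ≤ n ∧ (rauzyGraph X n).OMC

/-- The set of NMC subshifts. -/
def NMCset : Set Subshift := {X | X.IsNMC}

/-- The set of OMC subshifts. -/
def OMCset : Set Subshift := {X | X.IsOMC}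

/-- `𝐒'`: the complement of the set of NMC subshifts. -/
def Sprime : Set Subshift := NMCsetᶜ

/-- The shift of a point by `k`: `(σ^k x) i = x (i + k)`. -/
def shiftBy (k : ℤ) (x : ℤ → ℤ) : ℤ → ℤ := fun i => x (i + k)

/-- The orbit `{σ^k x : k ∈ ℤ}` of a point. -/
def orbitOf (x : ℤ → ℤ) : Set (ℤ → ℤ) := {y | ∃ k : ℤ, y = shiftBy k x}

/-- `X` is (topologically) transitive: some point has dense orbit. -/
def Subshift.IsTransitive (X : Subshift) : Prop :=
  ∃ x ∈ X.carrier, X.carrier ⊆ closure (orbitOf x)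

/-- `X` is totally transitive: for every `k ≥ 1` some point has dense `σ^k`-orbit. -/
def Subshift.IsTotallyTransitive (X : Subshift) : Prop :=
  ∀ k : ℕ, 1 ≤ k → ∃ x ∈ X.carrier,
    X.carrier ⊆ closure {y | ∃ m : ℤ, y = shiftBy (m * k) x}

/-- `𝒯'`: the set of infinite transitive subshifts. -/
def Tprime : Set Subshift := {X | X.IsTransitive ∧ X.carrier.Infinite}

/-- `𝒯𝒯'`: the set of infinite totally transitive subshifts. -/
def TTprime : Set Subshift := {X | X.IsTotallyTransitive ∧ X.carrier.Infinite}

/-- `X` is minimal: every word of the language occurs in every point. -/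
def Subshift.IsMinimal (X : Subshift) : Prop :=
  ∀ n : ℕ, ∀ w ∈ X.lang n, ∀ x ∈ X.carrier, Occurs w x

/-- `X` has a periodic point. -/
def Subshift.HasPeriodicPoint (X : Subshift) : Prop :=
  ∃ x ∈ X.carrier, ∃ k : ℕ, 1 ≤ k ∧ ∀ i : ℤ, x (i + k) = x i

/-- `X` is topologically mixing. -/
def Subshift.IsMixing (X : Subshift) : Prop :=
  ∀ (nv nw : ℕ), ∀ v ∈ X.lang nv, ∀ w ∈ X.lang nw, ∃ N : ℕ, ∀ n : ℕ, N < n →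
    ∃ x ∈ X.carrier, (∀ i : Fin v.length, x (i.1 : ℤ) = v.get i) ∧
      ∀ i : Fin w.length, x ((n : ℤ) + (i.1 : ℤ)) = w.get i

lemma Subshift.shift_mem (X : Subshift) {x : ℤ → ℤ} (hx : x ∈ X.carrier) :
    shift x ∈ X.carrier :=
  X.shift_invariant ▸ Set.mem_image_of_mem shift hx

/-- The restriction of the shift map to `X`. -/
def Subshift.restrictShift (X : Subshift) : ↥X.carrier → ↥X.carrier :=
  fun x => ⟨shift x.1, X.shift_mem x.2⟩

/-- Topological conjugacy of subshifts. -/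
def Conjugate (X Y : Subshift) : Prop :=
  ∃ φ : ↥X.carrier ≃ₜ ↥Y.carrier, ∀ x, φ (X.restrictShift x) = Y.restrictShift (φ x)

/-- `lam` is a topological eigenvalue of `(X, σ)`. -/
def Subshift.IsTopEigenvalue (X : Subshift) (lam : ℂ) : Prop :=
  ∃ f : ↥X.carrier → ℂ, Continuous f ∧ (∃ x, f x ≠ 0) ∧
    ∀ x, f (X.restrictShift x) = lam * f x

/-- A regular Toeplitz sequence. -/
def IsRegularToeplitz (x : ℤ → ℤ) : Prop :=
  ∀ ε : ℝ, 0 < ε → ∃ n : ℕ, 0 < n ∧ ∃ S : Finset ℕ, S ⊆ Finset.range n ∧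
    (1 - ε) * (n : ℝ) < (S.card : ℝ) ∧
    ∀ s ∈ S, ∀ i j : ℤ, x ((s : ℤ) + i * (n : ℤ)) = x ((s : ℤ) + j * (n : ℤ))

/-- A regular Toeplitz subshift: the orbit closure of a regular Toeplitz sequence. -/
def Subshift.IsRegularToeplitzSubshift (X : Subshift) : Prop :=
  ∃ x : ℤ → ℤ, IsRegularToeplitz x ∧ X.carrier = closure (orbitOf x)

/-- `X` is the disjoint union of `σ^i E`, `0 ≤ i < n`, for some clopen `E`. -/
def Subshift.HasCyclicPartition (X : Subshift) (n : ℕ) : Prop :=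
  ∃ E : Set ↥X.carrier, IsClopen E ∧
    (⋃ i ∈ Finset.range n, X.restrictShift^[i] '' E) = Set.univ ∧
    ∀ i j : ℕ, i < n → j < n → i ≠ j →
      Disjoint (X.restrictShift^[i] '' E) (X.restrictShift^[j] '' E)

/-- The biinfinite periodic point `p^∞` (with `p` occupying positions `[0, |p|)` and
repeating in both directions). -/
def perPoint (p : List ℤ) : ℤ → ℤ :=
  fun i => p.getD (Int.emod i (p.length : ℤ)).toNat 0

/-- The point `p^∞ m s^∞`: a left-infinite repetition of `p` (ending at position `-1`),
then `m` on `[0, |m|)`, then a right-infinite repetition of `s`. -/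
def barbellPoint (p m s : List ℤ) : ℤ → ℤ := fun i =>
  if i < 0 then perPoint p i
  else if i < (m.length : ℤ) then m.getD i.toNat 0
  else perPoint s (i - (m.length : ℤ))

/-- `𝐒(Y)`: the subshifts contained in `Y`. -/
def SubshiftsOf (Y : Subshift) : Set Subshift := {X | X.carrier ⊆ Y.carrier}

/-- `τ(y)`: the biinfinite concatenation `⋯ t(y₋₁).t(y₀) t(y₁) ⋯` of blocks of length `ℓ`. -/
def tauPoint (t : ℤ → List ℤ) (ℓ : ℕ) (y : ℤ → ℤ) : ℤ → ℤ :=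
  fun j => (t (y (Int.ediv j (ℓ : ℤ)))).getD (Int.emod j (ℓ : ℤ)).toNat 0

/-- `τ*(Y) = {σ^i τ(y) : y ∈ Y, 0 ≤ i < ℓ}`. -/
def tauStar (t : ℤ → List ℤ) (ℓ : ℕ) (Y : Subshift) : Set (ℤ → ℤ) :=
  {z | ∃ y ∈ Y.carrier, ∃ i : ℕ, i < ℓ ∧ z = fun j => tauPoint t ℓ y (j + (i : ℤ))}

/-- `τ(v)` for a finite word `v`: the concatenation of the blocks. -/
def tauWord (t : ℤ → List ℤ) (v : List ℤ) : List ℤ := (v.map t).flatten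

/-- The set of `σ`-orbits of `X`. -/
def Subshift.orbitSet (X : Subshift) : Set (Set (ℤ → ℤ)) :=
  {O | ∃ x ∈ X.carrier, O = orbitOf x}




/-- The window word `x[a, a+m)`. -/
def wd (x : ℤ → ℤ) (a : ℤ) (m : ℕ) : List ℤ := List.ofFn (fun s : Fin m => x (a + s))

lemma wd_length (x : ℤ → ℤ) (a : ℤ) (m : ℕ) : (wd x a m).length = m := by
  simp [wd]

lemma wd_eq_iff {x y : ℤ → ℤ} {a b : ℤ} {m : ℕ} :
    wd x a m = wd y b m ↔ ∀ s : ℕ, s < m → x (a + s) = y (b + s) := by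
  rw [wd, wd, List.ofFn_inj]
  constructor
  · intro h s hs
    exact congrFun h ⟨s, hs⟩
  · intro h
    funext s
    exact h s.1 s.2

lemma shiftBy_shiftBy (a b : ℤ) (x : ℤ → ℤ) :
    shiftBy a (shiftBy b x) = shiftBy (a + b) x := by
  funext i; simp [shiftBy, add_assoc]

lemma shiftBy_zero (x : ℤ → ℤ) : shiftBy 0 x = x := by funext i; simp [shiftBy]

lemma mem_orbitOf_self (x : ℤ → ℤ) : x ∈ orbitOf x := ⟨0, (shiftBy_zero x).symm⟩

lemma Subshift.shiftBy_mem (X : Subshift) {x : ℤ → ℤ} (hx : x ∈ X.carrier) (k : ℤ) :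
    shiftBy k x ∈ X.carrier := by
  induction k using Int.induction_on with
  | zero => rwa [shiftBy_zero]
  | succ n ih =>
      have : shiftBy (n + 1 : ℤ) x = shift (shiftBy n x) := by
        funext i; simp [shift, shiftBy, add_assoc, add_comm (1:ℤ)]
      rw [this]
      exact X.shift_invariant ▸ Set.mem_image_of_mem shift ih
  | pred n ih =>
      have h2 : shiftBy (-n : ℤ) x ∈ shift '' X.carrier := X.shift_invariant.symm ▸ ih
      obtain ⟨y, hy, hsy⟩ := h2
      have : y = shiftBy (-(n:ℤ) - 1) x := by
        funext i
        have h := congrFun hsy (i - 1)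
        simp only [shift, shiftBy] at h
        have e1 : i - 1 + 1 = i := by ring
        have e2 : i - 1 + -(n:ℤ) = i + (-(n:ℤ) - 1) := by ring
        rw [e1, e2] at h
        exact h
      rwa [this] at hy

/-- Normal form for membership in the language. -/
lemma Subshift.mem_lang_iff (X : Subshift) {w : List ℤ} {m : ℕ} :
    w ∈ X.lang m ↔ ∃ x ∈ X.carrier, w = wd x 0 m := by
  constructor
  · rintro ⟨hlen, x, hx, hco⟩
    refine ⟨x, hx, ?_⟩
    subst hlen
    apply List.ext_get (by simp [wd])
    intro i h1 h2
    have h := hco ⟨i, h1⟩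
    simp only [List.get_eq_getElem] at h ⊢
    rw [← h]
    simp [wd]
  · rintro ⟨x, hx, rfl⟩
    refine ⟨wd_length x 0 m, x, hx, ?_⟩
    intro i
    have hi : (i : ℕ) < m := by have := i.2; simpa [wd_length] using this
    rw [List.get_eq_getElem]
    simp [wd]

lemma wd_zero_shiftBy (x : ℤ → ℤ) (a : ℤ) (m : ℕ) : wd (shiftBy a x) 0 m = wd x a m := by
  rw [wd_eq_iff]; intro s hs; simp [shiftBy, add_comm]

lemma Subshift.wd_mem_lang (X : Subshift) {x : ℤ → ℤ} (hx : x ∈ X.carrier) (a : ℤ) (m : ℕ) :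
    wd x a m ∈ X.lang m :=
  X.mem_lang_iff.2 ⟨shiftBy a x, X.shiftBy_mem hx a, (wd_zero_shiftBy x a m).symm⟩

/-- Points of the closure of an orbit have all windows occurring in the base point. -/
lemma window_of_closure_orbit {x y : ℤ → ℤ} (hy : y ∈ closure (orbitOf x)) (m : ℕ) :
    ∃ a : ℤ, wd y 0 m = wd x a m := by
  set V : Set (ℤ → ℤ) := ⋂ s ∈ Finset.range m, {u : ℤ → ℤ | u (s : ℤ) = y (s : ℤ)} with hV
  have hVopen : IsOpen V := by
    refine isOpen_biInter_finset (fun s _ => ?_)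
    have hc : Continuous (fun u : ℤ → ℤ => u (s : ℤ)) := continuous_apply _
    exact hc.isOpen_preimage {y ((s : ℤ))} (isOpen_discrete _)
  have hyV : y ∈ V := by simp [hV]
  obtain ⟨u, huV, k, rfl⟩ := mem_closure_iff.1 hy V hVopen hyV
  refine ⟨k, ?_⟩
  rw [wd_eq_iff]
  intro s hs
  have hu : shiftBy k x (s : ℤ) = y (s : ℤ) := by
    simp only [hV, Set.mem_iInter] at huV
    exact huV s (Finset.mem_range.2 hs)
  simp only [shiftBy] at hu
  simp only [zero_add]
  rw [← hu]
  simp [shiftBy, add_comm]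




/-- The shift as a homeomorphism. -/
def shiftHomeo : (ℤ → ℤ) ≃ₜ (ℤ → ℤ) where
  toFun := shift
  invFun := shiftBy (-1)
  left_inv := by intro x; funext i; simp [shift, shiftBy]
  right_inv := by intro x; funext i; simp [shift, shiftBy]
  continuous_toFun := continuous_pi (fun i => continuous_apply (i + 1))
  continuous_invFun := continuous_pi (fun i => continuous_apply (i + (-1)))

lemma shift_eq_homeo : shift = ⇑shiftHomeo := rfl

lemma shift_image_orbit (x : ℤ → ℤ) : shift '' orbitOf x = orbitOf x := by
  ext y
  constructor
  · rintro ⟨u, ⟨k, rfl⟩, rfl⟩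
    refine ⟨k + 1, ?_⟩
    funext i; simp only [shift, shiftBy]; ring_nf
  · rintro ⟨k, rfl⟩
    refine ⟨shiftBy (k - 1) x, ⟨k - 1, rfl⟩, ?_⟩
    funext i; simp only [shift, shiftBy]; ring_nf

/-- The orbit closure of a point with values in a finite alphabet is a subshift. -/
noncomputable def orbitClosure (x : ℤ → ℤ) (A : Finset ℤ) (hA : ∀ i : ℤ, x i ∈ A) :
    Subshift where
  carrier := closure (orbitOf x)
  nonempty' := ⟨x, subset_closure (mem_orbitOf_self x)⟩
  finite_alphabet := by
    refine ⟨A, fun y hy i => ?_⟩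
    have hsub : closure (orbitOf x) ⊆ Set.univ.pi (fun _ : ℤ => (A : Set ℤ)) := by
      apply closure_minimal
      · rintro y ⟨k, rfl⟩ j _
        exact hA _
      · exact isClosed_set_pi (fun j _ => isClosed_discrete _)
    exact hsub hy i (Set.mem_univ i)
  shift_invariant := by
    rw [shift_eq_homeo, shiftHomeo.image_closure, ← shift_eq_homeo, shift_image_orbit]
  isCompact' := by
    have hcomp : IsCompact (Set.univ.pi (fun _ : ℤ => (A : Set ℤ))) :=
      isCompact_univ_pi (fun i => A.finite_toSet.isCompact)
    refine hcomp.of_isClosed_subset isClosed_closure ?_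
    apply closure_minimal
    · rintro y ⟨k, rfl⟩ j _
      exact hA _
    · exact isClosed_set_pi (fun j _ => isClosed_discrete _)



lemma wd_take (x : ℤ → ℤ) (a : ℤ) {k m : ℕ} (h : k ≤ m) :
    (wd x a m).take k = wd x a k := by
  apply List.ext_get
  · simp [wd]; omega
  · intro i h1 h2
    simp only [List.get_eq_getElem, List.getElem_take, wd, List.getElem_ofFn]

lemma orbitClosure_lang (x : ℤ → ℤ) (A : Finset ℤ) (hA : ∀ i : ℤ, x i ∈ A) (m : ℕ) :
    (orbitClosure x A hA).lang m = {w | ∃ a : ℤ, w = wd x a m} := by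
  ext w
  rw [Subshift.mem_lang_iff]
  constructor
  · rintro ⟨y, hy, rfl⟩
    exact window_of_closure_orbit hy m
  · rintro ⟨a, rfl⟩
    exact ⟨shiftBy a x, subset_closure ⟨a, rfl⟩, (wd_zero_shiftBy x a m).symm⟩

lemma Subshift.lang_finite (X : Subshift) (m : ℕ) : (X.lang m).Finite := by
  obtain ⟨A, hA⟩ := X.finite_alphabet
  have : X.lang m ⊆ (fun f : Fin m → ↥A => List.ofFn (fun i => (f i : ℤ))) '' Set.univ := by
    intro w hw
    obtain ⟨x, hx, rfl⟩ := X.mem_lang_iff.1 hw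
    exact ⟨fun i => ⟨x ((0:ℤ) + (i : ℕ)), hA x hx _⟩, Set.mem_univ _, rfl⟩
  exact (Set.finite_univ.image _).subset this

lemma Subshift.lang_nonempty (X : Subshift) (m : ℕ) : (X.lang m).Nonempty := by
  obtain ⟨x, hx⟩ := X.nonempty'
  exact ⟨wd x 0 m, X.wd_mem_lang hx 0 m⟩

lemma Subshift.lang_take (X : Subshift) {k m : ℕ} (h : k ≤ m) :
    X.lang k = (List.take k) '' X.lang m := by
  ext w
  constructor
  · intro hw
    obtain ⟨x, hx, rfl⟩ := X.mem_lang_iff.1 hw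
    exact ⟨wd x 0 m, X.wd_mem_lang hx 0 m, wd_take x 0 h⟩
  · rintro ⟨v, hv, rfl⟩
    obtain ⟨x, hx, rfl⟩ := X.mem_lang_iff.1 hv
    rw [wd_take x 0 h]
    exact X.wd_mem_lang hx 0 k

lemma Subshift.complexity_le_succ (X : Subshift) (m : ℕ) :
    X.complexity m ≤ X.complexity (m + 1) := by
  unfold complexity
  rw [X.lang_take (Nat.le_succ m)]
  exact Set.ncard_image_le (X.lang_finite (m+1))

lemma Subshift.complexity_strictMono (X : Subshift) (hinf : X.carrier.Infinite) :
    StrictMono X.complexity := by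
  apply strictMono_nat_of_lt_succ
  intro n
  by_contra hlt
  push_neg at hlt
  have hcn : X.complexity n ≤ X.complexity (n+1) := X.complexity_le_succ n
  have heq : X.complexity (n+1) = X.complexity n := le_antisymm hlt hcn
  have hbase : Set.InjOn (List.take n) (X.lang (n+1)) := by
    apply Set.injOn_of_ncard_image_eq
    · rw [← X.lang_take (Nat.le_succ n)]
      exact heq.symm
    · exact X.lang_finite (n+1)
  have hcoord : ∀ x y : ℤ → ℤ, x ∈ X.carrier → y ∈ X.carrier → ∀ m : ℕ,
      (∀ s : ℕ, s < n + m → x (s:ℤ) = y (s:ℤ)) →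
      x ((n + m : ℕ) : ℤ) = y ((n + m : ℕ) : ℤ) := by
    intro x y hx hy m hagree
    have hu : wd x (m:ℤ) (n+1) ∈ X.lang (n+1) := X.wd_mem_lang hx _ _
    have hv : wd y (m:ℤ) (n+1) ∈ X.lang (n+1) := X.wd_mem_lang hy _ _
    have htake : (wd x (m:ℤ) (n+1)).take n = (wd y (m:ℤ) (n+1)).take n := by
      rw [wd_take _ _ (Nat.le_succ n), wd_take _ _ (Nat.le_succ n), wd_eq_iff]
      intro s hs
      have h1 := hagree (m + s) (by omega)
      convert h1 using 2 <;> push_cast <;> ring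
    have h2 := hbase hu hv htake
    rw [wd_eq_iff] at h2
    have h3 := h2 n (Nat.lt_succ_self n)
    convert h3 using 2 <;> push_cast <;> ring
  have hconst : ∀ m : ℕ, X.complexity (n + m) = X.complexity n := by
    intro m
    induction m with
    | zero => rfl
    | succ m ih =>
        have hinj : Set.InjOn (List.take (n+m)) (X.lang (n+m+1)) := by
          intro u hu v hv htk
          obtain ⟨x, hx, rfl⟩ := X.mem_lang_iff.1 hu
          obtain ⟨y, hy, rfl⟩ := X.mem_lang_iff.1 hv
          rw [wd_take _ _ (by omega), wd_take _ _ (by omega), wd_eq_iff] at htk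
          rw [wd_eq_iff]
          intro s hs
          rcases Nat.lt_or_ge s (n+m) with hcase | hcase
          · exact htk s hcase
          · have hs' : s = n + m := by omega
            subst hs'
            have h4 := hcoord x y hx hy m (fun t ht => by
              have := htk t ht
              simpa using this)
            simpa using h4
        have h5 : X.complexity (n + m) = X.complexity (n+m+1) := by
          unfold Subshift.complexity
          rw [X.lang_take (Nat.le_succ (n+m)), Set.ncard_image_of_injOn hinj]
        show X.complexity ((n+m)+1) = X.complexity n
        rw [← h5]
        exact ih
  -- now derive a contradiction from infiniteness
  set C := X.complexity n with hC
  obtain ⟨t, htsub, htcard⟩ := hinf.exists_subset_card_eq (C+1)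
  have hdiff : ∀ x y : ℤ → ℤ, x ≠ y → ∃ i : ℤ, x i ≠ y i := by
    intro x y hxy
    by_contra hcon
    push_neg at hcon
    exact hxy (funext hcon)
  choose d hd using hdiff
  classical
  set R : ℕ := t.sup (fun x => t.sup (fun y => if h : x = y then 0 else (d x y h).natAbs))
    with hR
  have hRb : ∀ x ∈ t, ∀ y ∈ t, (h : x ≠ y) → (d x y h).natAbs ≤ R := by
    intro x hx y hy h
    calc (d x y h).natAbs
        = (if h' : x = y then 0 else (d x y h').natAbs) := by rw [dif_neg h]
      _ ≤ t.sup (fun y => if h' : x = y then 0 else (d x y h').natAbs) :=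
          Finset.le_sup (f := fun y => if h' : x = y then 0 else (d x y h').natAbs) hy
      _ ≤ R := Finset.le_sup (f := fun x => t.sup (fun y => if h' : x = y then 0 else (d x y h').natAbs)) hx
  set L : ℕ := n + (2*R+1) with hL
  set f : (ℤ → ℤ) → List ℤ := fun x => wd x (-(R:ℤ)) L with hf
  have hfinj : Set.InjOn f (↑t : Set (ℤ → ℤ)) := by
    intro x hx y hy hfeq
    by_contra hne
    have hi := hd x y hne
    have hb := hRb x (by exact_mod_cast hx) y (by exact_mod_cast hy) hne
    set i := d x y hne
    rw [hf] at hfeq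
    simp only at hfeq
    rw [wd_eq_iff] at hfeq
    have hs : (i + R).toNat < L := by omega
    have := hfeq (i + R).toNat hs
    have harg : -(R:ℤ) + ((i + R).toNat : ℤ) = i := by
      rw [Int.toNat_of_nonneg (by omega)]; ring
    rw [harg] at this
    exact hi this
  have himg : f '' (↑t : Set (ℤ → ℤ)) ⊆ X.lang L := by
    rintro w ⟨x, hx, rfl⟩
    exact X.wd_mem_lang (htsub hx) _ _
  have hcard1 : (f '' (↑t : Set (ℤ → ℤ))).ncard = C + 1 := by
    rw [Set.ncard_image_of_injOn hfinj, Set.ncard_coe_finset, htcard]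
  have hcard2 : (f '' (↑t : Set (ℤ → ℤ))).ncard ≤ C := by
    have := Set.ncard_le_ncard himg (X.lang_finite L)
    have hcl : X.complexity L = C := by
      have := hconst (2*R+1)
      rw [← hL] at this
      exact this
    rw [← hcl]
    exact this
  omega

lemma cylinder_antitone (X : Subshift) {k m : ℕ} (h : k ≤ m) :
    cylinder X m ⊆ cylinder X k := by
  intro Y hY
  show Y.lang k = X.lang k
  rw [Y.lang_take h, X.lang_take h]
  rw [show Y.lang m = X.lang m from hY]

lemma isOpen_cylinder (X : Subshift) (n : ℕ) : IsOpen (cylinder X n) :=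
  TopologicalSpace.GenerateOpen.basic _ ⟨X, n, rfl⟩

lemma exists_cylinder_subset {U : Set Subshift} (hU : IsOpen U) :
    ∀ X ∈ U, ∃ n, cylinder X n ⊆ U := by
  have hgen : TopologicalSpace.GenerateOpen
      {C | ∃ (X : Subshift) (n : ℕ), C = cylinder X n} U := hU
  induction hgen with
  | basic V hV =>
      obtain ⟨X₀, n, rfl⟩ := hV
      intro X hX
      exact ⟨n, fun Y hY => (show Y.lang n = X.lang n from hY).trans hX⟩
  | univ => exact fun X _ => ⟨0, fun _ _ => trivial⟩
  | inter V W hV hW ihV ihW =>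
      intro X hX
      obtain ⟨a, ha⟩ := ihV hV X hX.1
      obtain ⟨b, hb⟩ := ihW hW X hX.2
      exact ⟨max a b, fun Y hY => ⟨ha (cylinder_antitone X (le_max_left a b) hY),
        hb (cylinder_antitone X (le_max_right a b) hY)⟩⟩
  | sUnion S hS ih =>
      intro X hX
      obtain ⟨V, hVS, hXV⟩ := hX
      obtain ⟨n, hn⟩ := ih V hVS (hS V hVS) X hXV
      exact ⟨n, fun Y hY => ⟨V, hVS, hn hY⟩⟩

lemma complexity_congr {X Y : Subshift} {n : ℕ} (h : Y.lang n = X.lang n) :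
    Y.complexity n = X.complexity n := by
  unfold Subshift.complexity
  rw [h]

lemma occurs_in_point {Z : Subshift} {z : ℤ → ℤ} (hzd : Z.carrier ⊆ closure (orbitOf z))
    {m : ℕ} {w : List ℤ} (hw : w ∈ Z.lang m) : ∃ a : ℤ, w = wd z a m := by
  obtain ⟨y, hy, rfl⟩ := Z.mem_lang_iff.1 hw
  exact window_of_closure_orbit (hzd hy) m

lemma repeat_window (Z : Subshift) {z : ℤ → ℤ} (hz : z ∈ Z.carrier) (nn : ℕ) (a : ℤ) :
    ∃ i j : ℤ, a ≤ i ∧ i < j ∧ j ≤ a + Z.complexity nn ∧ wd z i nn = wd z j nn := by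
  classical
  set K := Z.complexity nn with hK
  have hfin := Z.lang_finite nn
  set s := hfin.toFinset with hs
  have hcard : s.card = K := by
    rw [hs, hK, Subshift.complexity, Set.ncard_eq_toFinset_card _ hfin]
  set f : Fin (K + 1) → {w // w ∈ s} :=
    fun t => ⟨wd z (a + t) nn, by
      rw [hs, Set.Finite.mem_toFinset]
      exact Z.wd_mem_lang hz _ _⟩ with hf
  have hlt : Fintype.card {w // w ∈ s} < Fintype.card (Fin (K + 1)) := by
    rw [Fintype.card_coe, hcard, Fintype.card_fin]
    omega
  obtain ⟨t, t', htt, hfeq⟩ := Fintype.exists_ne_map_eq_of_card_lt f hlt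
  rcases Nat.lt_or_ge t.1 t'.1 with hlt' | hge
  · refine ⟨a + t, a + t', by omega, by omega, ?_, ?_⟩
    · have := t'.2; push_cast; omega
    · have := congrArg Subtype.val hfeq
      simpa [hf] using this
  · have hlt'' : t'.1 < t.1 := by
      rcases Nat.lt_or_ge t'.1 t.1 with h | h
      · exact h
      · exact absurd (Fin.ext (by omega)) htt
    refine ⟨a + t', a + t, by omega, by omega, ?_, ?_⟩
    · have := t.2; push_cast; omega
    · have := congrArg Subtype.val hfeq
      simpa [hf] using this.symm

lemma construction (Z : Subshift) (htr : Z.IsTransitive) (hinf : Z.carrier.Infinite)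
    (nn : ℕ) :
    ∃ Y : Subshift, Y.IsTransitive ∧ Y.carrier.Infinite ∧ Y.lang (nn+1) = Z.lang (nn+1) ∧
      ∃ C : ℕ, ∀ m : ℕ, Y.complexity m ≤ m + C := by
  classical
  obtain ⟨z, hz, hzd⟩ := htr
  have SM := Z.complexity_strictMono hinf
  set K := Z.complexity nn with hKdef
  -- positions covering all words of the language
  have hocc : ∀ w ∈ Z.lang (nn+1), ∃ a : ℤ, w = wd z a (nn+1) :=
    fun w hw => occurs_in_point hzd hw
  choose! pos hpos using hocc
  set sfin := (Z.lang_finite (nn+1)).toFinset with hsfin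
  set R : ℕ := sfin.sup (fun w => (pos w).natAbs) with hR
  have hRb : ∀ w ∈ Z.lang (nn+1), (pos w).natAbs ≤ R := by
    intro w hw
    apply Finset.le_sup (f := fun w => (pos w).natAbs)
    rw [hsfin, Set.Finite.mem_toFinset]
    exact hw
  -- left repetition
  obtain ⟨i, j, hi1, hij, hj2, hm1⟩ := repeat_window Z hz nn (-(R:ℤ) - K)
  -- right repetition
  obtain ⟨k, l, hk1, hkl, hl2, hm2⟩ := repeat_window Z hz nn ((R:ℤ) + (nn+1))
  rw [← hKdef] at hj2 hl2
  set L1 := j - i with hL1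
  set L2 := l - k with hL2
  set M := l - j with hM
  have hL1pos : 0 < L1 := by omega
  have hL2pos : 0 < L2 := by omega
  have hL1K : L1 ≤ K := by omega
  have hL2K : L2 ≤ K := by omega
  have hMbig : (nn:ℤ) + 1 ≤ M := by omega
  have hjR : j ≤ -(R:ℤ) := by omega
  have hkR : (R:ℤ) + (nn+1) ≤ k := by omega
  -- matching facts
  rw [wd_eq_iff] at hm1 hm2
  have hmat1 : ∀ u : ℤ, 0 ≤ u → u < nn → z (i + u) = z (j + u) := by
    intro u h0 h1
    have := hm1 u.toNat (by omega)
    rwa [Int.toNat_of_nonneg h0] at this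
  have hmat2 : ∀ u : ℤ, 0 ≤ u → u < nn → z (k + u) = z (l + u) := by
    intro u h0 h1
    have := hm2 u.toNat (by omega)
    rwa [Int.toNat_of_nonneg h0] at this
  -- the point x
  set x : ℤ → ℤ := fun r =>
    if r < 0 then z (i + r % L1) else if r < M then z (j + r) else z (k + (r - M) % L2)
    with hx
  have hxval : ∀ v : ℤ, x v =
      if v < 0 then z (i + v % L1) else if v < M then z (j + v) else z (k + (v - M) % L2) :=
    fun v => rfl
  -- extended periodicity lemmas
  have hE1 : ∀ u : ℤ, 0 ≤ u → u ≤ L1 + nn - 1 → z (i + u % L1) = z (i + u) := by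
    have key : ∀ c : ℕ, ∀ u : ℤ, u.toNat ≤ c → 0 ≤ u → u ≤ L1 + nn - 1 →
        z (i + u % L1) = z (i + u) := by
      intro c
      induction c with
      | zero =>
          intro u hc h0 h1
          have : u = 0 := by omega
          subst this
          simp
      | succ c ih =>
          intro u hc h0 h1
          by_cases hu : u < L1
          · rw [Int.emod_eq_of_lt h0 hu]
          · push_neg at hu
            have hw0 : 0 ≤ u - L1 := by omega
            have hw1 : u - L1 < nn := by omega
            have step : z (i + u) = z (i + (u - L1)) := by
              have h1' : z (i + (u - L1)) = z (j + (u - L1)) := hmat1 _ hw0 hw1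
              have h2' : j + (u - L1) = i + u := by omega
              rw [h1', h2']
            have hmod : u % L1 = (u - L1) % L1 := by
              have : u - L1 = u + L1 * (-1) := by ring
              rw [this, Int.add_mul_emod_self_left]
            rw [step, hmod]
            exact ih (u - L1) (by omega) hw0 (by omega)
    exact fun u h0 h1 => key u.toNat u le_rfl h0 h1
  have hE2 : ∀ u : ℤ, 0 ≤ u → u ≤ L2 + nn - 1 → z (k + u % L2) = z (k + u) := by
    have key : ∀ c : ℕ, ∀ u : ℤ, u.toNat ≤ c → 0 ≤ u → u ≤ L2 + nn - 1 →
        z (k + u % L2) = z (k + u) := by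
      intro c
      induction c with
      | zero =>
          intro u hc h0 h1
          have : u = 0 := by omega
          subst this
          simp
      | succ c ih =>
          intro u hc h0 h1
          by_cases hu : u < L2
          · rw [Int.emod_eq_of_lt h0 hu]
          · push_neg at hu
            have hw0 : 0 ≤ u - L2 := by omega
            have hw1 : u - L2 < nn := by omega
            have step : z (k + u) = z (k + (u - L2)) := by
              have h1' : z (k + (u - L2)) = z (l + (u - L2)) := hmat2 _ hw0 hw1
              have h2' : l + (u - L2) = k + u := by omega
              rw [h1', h2']
            have hmod : u % L2 = (u - L2) % L2 := by
              have : u - L2 = u + L2 * (-1) := by ring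
              rw [this, Int.add_mul_emod_self_left]
            rw [step, hmod]
            exact ih (u - L2) (by omega) hw0 (by omega)
    exact fun u h0 h1 => key u.toNat u le_rfl h0 h1
  have hmod1 : ∀ r s : ℤ, (r + s) % L1 = (r % L1 + s) % L1 := by
    intro r s
    rw [Int.add_emod r s, Int.add_emod (r % L1) s, Int.emod_emod_of_dvd _ (dvd_refl L1)]
  have hmod2 : ∀ r s : ℤ, (r + s) % L2 = (r % L2 + s) % L2 := by
    intro r s
    rw [Int.add_emod r s, Int.add_emod (r % L2) s, Int.emod_emod_of_dvd _ (dvd_refl L2)]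
  -- window lemmas
  have hWleft : ∀ r : ℤ, r < 0 → wd x r (nn+1) = wd z (i + r % L1) (nn+1) := by
    intro r hr
    rw [wd_eq_iff]
    intro s hs
    have hrem0 : 0 ≤ r % L1 := Int.emod_nonneg r (by omega)
    have hrem1 : r % L1 < L1 := Int.emod_lt_of_pos r hL1pos
    have hE1u : z (i + (r % L1 + s) % L1) = z (i + (r % L1 + s)) :=
      hE1 (r % L1 + s) (by omega) (by omega)
    have hgoal : i + r % L1 + (s:ℤ) = i + (r % L1 + s) := by ring
    by_cases hc : r + (s:ℤ) < 0
    · have hxv : x (r + s) = z (i + (r + s) % L1) := by rw [hxval, if_pos hc]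
      rw [hxv, hgoal, ← hE1u, hmod1]
    · push_neg at hc
      have hle : r + (s:ℤ) ≤ nn - 1 := by omega
      have hltM : r + (s:ℤ) < M := by omega
      have hxv : x (r + s) = z (j + (r + s)) := by
        rw [hxval, if_neg (not_lt.2 hc), if_pos hltM]
      have h1' : z (j + (r + s)) = z (i + (r + s)) := (hmat1 _ hc (by omega)).symm
      have h2' : z (i + (r + s) % L1) = z (i + (r + s)) := hE1 _ hc (by omega)
      rw [hxv, h1', ← h2', hgoal, ← hE1u, hmod1]
  have hWmid : ∀ r : ℤ, 0 ≤ r → r < M → wd x r (nn+1) = wd z (j + r) (nn+1) := by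
    intro r h0 hrM
    rw [wd_eq_iff]
    intro s hs
    have hc0 : ¬ (r + (s:ℤ) < 0) := by omega
    by_cases hc : r + (s:ℤ) < M
    · have hxv : x (r + s) = z (j + (r + s)) := by
        rw [hxval, if_neg hc0, if_pos hc]
      rw [hxv]; ring_nf
    · push_neg at hc
      have hxv : x (r + s) = z (k + (r + s - M) % L2) := by
        rw [hxval, if_neg hc0, if_neg (not_lt.2 hc)]
      have hu0 : 0 ≤ r + s - M := by omega
      have hu1 : r + s - M < nn := by omega
      have h1' : z (k + (r + s - M) % L2) = z (k + (r + s - M)) := hE2 _ hu0 (by omega)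
      have h2' : z (k + (r + s - M)) = z (l + (r + s - M)) := hmat2 _ hu0 hu1
      have h3' : l + (r + s - M) = j + r + s := by omega
      rw [hxv, h1', h2', h3']
  have hWright : ∀ r : ℤ, M ≤ r → wd x r (nn+1) = wd z (k + (r - M) % L2) (nn+1) := by
    intro r hrM
    rw [wd_eq_iff]
    intro s hs
    have hc0 : ¬ (r + (s:ℤ) < 0) := by omega
    have hcM : ¬ (r + (s:ℤ) < M) := by omega
    have hxv : x (r + s) = z (k + (r + s - M) % L2) := by
      rw [hxval, if_neg hc0, if_neg hcM]
    have hrem0 : 0 ≤ (r - M) % L2 := Int.emod_nonneg _ (by omega)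
    have hrem1 : (r - M) % L2 < L2 := Int.emod_lt_of_pos _ hL2pos
    have hE2u : z (k + ((r - M) % L2 + s) % L2) = z (k + ((r - M) % L2 + s)) :=
      hE2 _ (by omega) (by omega)
    have heq : (r + s - M) % L2 = ((r - M) % L2 + s) % L2 := by
      rw [← hmod2]; ring_nf
    have hgoal : k + (r - M) % L2 + (s:ℤ) = k + ((r - M) % L2 + s) := by ring
    rw [hxv, heq, hE2u, hgoal]
  -- all windows of x are in the language
  have hW : ∀ r : ℤ, wd x r (nn+1) ∈ Z.lang (nn+1) := by
    intro r
    by_cases h1 : r < 0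
    · rw [hWleft r h1]; exact Z.wd_mem_lang hz _ _
    · push_neg at h1
      by_cases h2 : r < M
      · rw [hWmid r h1 h2]; exact Z.wd_mem_lang hz _ _
      · push_neg at h2
        rw [hWright r h2]; exact Z.wd_mem_lang hz _ _
  -- all words of the language occur in x
  have hCov : ∀ w ∈ Z.lang (nn+1), ∃ r : ℤ, w = wd x r (nn+1) := by
    intro w hw
    have hpw := hpos w hw
    have hb := hRb w hw
    set a := pos w with ha
    refine ⟨a - j, ?_⟩
    have h0 : 0 ≤ a - j := by omega
    have hM' : a - j < M := by omega
    rw [hWmid _ h0 hM']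
    have : j + (a - j) = a := by ring
    rw [this]
    exact hpw
  -- the alphabet
  obtain ⟨A, hA⟩ := Z.finite_alphabet
  have hxA : ∀ r : ℤ, x r ∈ A := by
    intro r
    rw [hxval]
    split
    · exact hA z hz _
    · split
      · exact hA z hz _
      · exact hA z hz _
  set Y := orbitClosure x A hxA with hY
  have hYlang : ∀ m : ℕ, Y.lang m = {w | ∃ a : ℤ, w = wd x a m} :=
    fun m => orbitClosure_lang x A hxA m
  -- language equality at level nn+1
  have hlangeq : Y.lang (nn+1) = Z.lang (nn+1) := by
    rw [hYlang]
    ext w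
    constructor
    · rintro ⟨r, rfl⟩
      exact hW r
    · intro hw
      exact hCov w hw
  -- x is aperiodic
  have haper : ∀ T : ℤ, 1 ≤ T → ¬ (∀ v : ℤ, x (v + T) = x v) := by
    intro T hT hper
    have hshift : ∀ t : ℕ, ∀ v : ℤ, x v = x (v - T * t) := by
      intro t
      induction t with
      | zero => intro v; simp
      | succ t ih =>
          intro v
          have h1' : x (v - T * ((t:ℤ)+1) + T) = x (v - T * ((t:ℤ)+1)) := hper _
          have h2' : v - T * ((t:ℤ)+1) + T = v - T * t := by push_cast; ring
          rw [h2'] at h1'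
          have h4' : v - T * ((t:ℤ)+1) = v - T * ((t+1 : ℕ) : ℤ) := by push_cast; ring
          rw [h4'] at h1'
          rw [ih v]
          exact h1'

    have hsub : Z.lang (nn+1) ⊆
        (fun φ : ℤ => wd z (i + φ) (nn+1)) '' (Set.Ico (0:ℤ) L1) := by
      intro w hw
      obtain ⟨r, rfl⟩ := hCov w hw
      set t : ℕ := (r + nn + 1).toNat with ht
      have hTt : r + nn + 1 ≤ T * t := by
        have h1' : (t:ℤ) ≤ T * t := by
          have : (1:ℤ) * t ≤ T * t := by
            apply mul_le_mul_of_nonneg_right hT (by positivity)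
          simpa using this
        omega
      have hshifted : wd x r (nn+1) = wd x (r - T * t) (nn+1) := by
        rw [wd_eq_iff]
        intro s hs
        have := hshift t (r + s)
        have harg : r + (s:ℤ) - T * t = r - T * t + s := by ring
        rw [harg] at this
        exact this
      have hneg : r - T * t < 0 := by omega
      rw [hshifted, hWleft _ hneg]
      refine ⟨(r - T * t) % L1, ?_, rfl⟩
      exact ⟨Int.emod_nonneg _ (by omega), Int.emod_lt_of_pos _ hL1pos⟩
    have hcount : Z.complexity (nn+1) ≤ L1.toNat := by
      have h1' : Z.complexity (nn+1) ≤
          ((fun φ : ℤ => wd z (i + φ) (nn+1)) '' (Set.Ico (0:ℤ) L1)).ncard :=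
        Set.ncard_le_ncard hsub ((Set.finite_Ico (0:ℤ) L1).image _)
      have h2' : ((fun φ : ℤ => wd z (i + φ) (nn+1)) '' (Set.Ico (0:ℤ) L1)).ncard ≤
          (Set.Ico (0:ℤ) L1).ncard :=
        Set.ncard_image_le (Set.finite_Ico (0:ℤ) L1)
      have h3' : (Set.Ico (0:ℤ) L1).ncard = L1.toNat := by
        rw [← Finset.coe_Ico, Set.ncard_coe_finset, Int.card_Ico]
        simp
      omega
    have hKlt : K < Z.complexity (nn+1) := SM (Nat.lt_succ_self nn)
    omega
  -- Y is infinite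
  have hYinf : Y.carrier.Infinite := by
    apply Set.infinite_of_injective_forall_mem (f := fun kk : ℤ => shiftBy kk x)
    · intro a b hab
      by_contra hne
      rcases lt_trichotomy a b with h | h | h
      · apply haper (b - a) (by omega)
        intro v
        have h1' := congrFun hab (v - a)
        simp only [shiftBy] at h1'
        have e1 : v - a + a = v := by ring
        have e2 : v - a + b = v + (b - a) := by ring
        rw [e1, e2] at h1'
        exact h1'.symm
      · exact hne h
      · apply haper (a - b) (by omega)
        intro v
        have h1' := congrFun hab (v - b)
        simp only [shiftBy] at h1'
        have e1 : v - b + b = v := by ring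
        have e2 : v - b + a = v + (a - b) := by ring
        rw [e1, e2] at h1'
        exact h1'
    · intro a
      exact subset_closure ⟨a, rfl⟩
  -- Y is transitive
  have hYtr : Y.IsTransitive := by
    refine ⟨x, subset_closure (mem_orbitOf_self x), ?_⟩
    exact fun y hy => hy
  -- complexity bound
  have hPleft : ∀ m : ℕ, ∀ r r' : ℤ, r + m ≤ 0 → r' + m ≤ 0 → r % L1 = r' % L1 →
      wd x r m = wd x r' m := by
    intro m r r' h1' h2' h3'
    rw [wd_eq_iff]
    intro s hs
    have hc1 : r + (s:ℤ) < 0 := by omega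
    have hc2 : r' + (s:ℤ) < 0 := by omega
    have hxv1 : x (r + s) = z (i + (r + s) % L1) := by rw [hxval, if_pos hc1]
    have hxv2 : x (r' + s) = z (i + (r' + s) % L1) := by rw [hxval, if_pos hc2]
    rw [hxv1, hxv2, hmod1 r s, hmod1 r' s, h3']
  have hPright : ∀ m : ℕ, ∀ r r' : ℤ, M ≤ r → M ≤ r' → (r - M) % L2 = (r' - M) % L2 →
      wd x r m = wd x r' m := by
    intro m r r' h1' h2' h3'
    rw [wd_eq_iff]
    intro s hs
    have hc1 : ¬ (r + (s:ℤ) < 0) := by omega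
    have hc2 : ¬ (r' + (s:ℤ) < 0) := by omega
    have hcM1 : ¬ (r + (s:ℤ) < M) := by omega
    have hcM2 : ¬ (r' + (s:ℤ) < M) := by omega
    have hxv1 : x (r + s) = z (k + (r + s - M) % L2) := by
      rw [hxval, if_neg hc1, if_neg hcM1]
    have hxv2 : x (r' + s) = z (k + (r' + s - M) % L2) := by
      rw [hxval, if_neg hc2, if_neg hcM2]
    have e1 : r + (s:ℤ) - M = (r - M) + s := by ring
    have e2 : r' + (s:ℤ) - M = (r' - M) + s := by ring
    rw [hxv1, hxv2, e1, e2, hmod2 (r - M) s, hmod2 (r' - M) s, h3']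
  have hred : ∀ m : ℕ, ∀ r : ℤ, ∃ r' : ℤ, -(m:ℤ) - L1 ≤ r' ∧ r' ≤ M + L2 ∧
      wd x r m = wd x r' m := by
    intro m r
    by_cases h1 : r < -(m:ℤ)
    · set r' := -(m:ℤ) - L1 + (r + m) % L1 with hr'
      have hrem0 : 0 ≤ (r + m) % L1 := Int.emod_nonneg _ (by omega)
      have hrem1 : (r + m) % L1 < L1 := Int.emod_lt_of_pos _ hL1pos
      refine ⟨r', by omega, by omega, ?_⟩
      apply hPleft m r r' (by omega) (by omega)
      have hmul : r' = r + L1 * (-((r + m) / L1) - 1) := by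
        rw [hr', Int.emod_def]; ring
      have : r' % L1 = r % L1 := by rw [hmul, Int.add_mul_emod_self_left]
      exact this.symm
    · push_neg at h1
      by_cases h2 : M < r
      · set r' := M + (r - M) % L2 with hr'
        have hrem0 : 0 ≤ (r - M) % L2 := Int.emod_nonneg _ (by omega)
        have hrem1 : (r - M) % L2 < L2 := Int.emod_lt_of_pos _ hL2pos
        refine ⟨r', by omega, by omega, ?_⟩
        apply hPright m r r' (by omega) (by omega)
        have : r' - M = (r - M) % L2 := by omega
        rw [this, Int.emod_emod_of_dvd _ (dvd_refl L2)]
      · push_neg at h2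
        exact ⟨r, by omega, by omega, rfl⟩
  set C : ℕ := (L1 + L2 + M).toNat + 1 with hC
  have hbound : ∀ m : ℕ, Y.complexity m ≤ m + C := by
    intro m
    have hsub : Y.lang m ⊆
        (fun r : ℤ => wd x r m) '' ↑(Finset.Icc (-(m:ℤ) - L1) (M + L2)) := by
      intro w hw
      rw [hYlang] at hw
      obtain ⟨r, rfl⟩ := hw
      obtain ⟨r', hr1, hr2, heq⟩ := hred m r
      exact ⟨r', Finset.mem_coe.2 (Finset.mem_Icc.2 ⟨hr1, hr2⟩), heq.symm⟩
    have h1' : Y.complexity m ≤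
        ((fun r : ℤ => wd x r m) '' ↑(Finset.Icc (-(m:ℤ) - L1) (M + L2))).ncard :=
      Set.ncard_le_ncard hsub ((Finset.Icc _ _).finite_toSet.image _)
    have h2' : ((fun r : ℤ => wd x r m) '' ↑(Finset.Icc (-(m:ℤ) - L1) (M + L2))).ncard ≤
        (↑(Finset.Icc (-(m:ℤ) - L1) (M + L2)) : Set ℤ).ncard :=
      Set.ncard_image_le (Finset.Icc _ _).finite_toSet
    have h3' : (↑(Finset.Icc (-(m:ℤ) - L1) (M + L2)) : Set ℤ).ncard =
        (M + L2 + 1 - (-(m:ℤ) - L1)).toNat := by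
      rw [Set.ncard_coe_finset, Int.card_Icc]
    have h4' : (M + L2 + 1 - (-(m:ℤ) - L1)).toNat ≤ m + C := by
      rw [hC]
      omega
    omega
  exact ⟨Y, hYtr, hYinf, hlangeq, C, hbound⟩

/-- For any unbounded increasing `h : ℕ → ℝ⁺`, the set of subshifts `X` with
`n ≤ c_X(n) ≤ n + h(n)` for infinitely many `n` is residual in `𝒯'‾`. -/
theorem low_complexity_residual_in_closure_tprime (h : ℕ → ℝ)
    (hpos : ∀ n, 0 < h n) (hmono : Monotone h) (hunb : Tendsto h atTop atTop) :
    ∃ G : Set ↥(closure Tprime),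
      G ⊆ {X : ↥(closure Tprime) | ∀ N : ℕ, ∃ n : ℕ, N < n ∧
        (n : ℝ) ≤ (X.1.complexity n : ℝ) ∧ (X.1.complexity n : ℝ) ≤ (n : ℝ) + h n} ∧
      IsGδ G ∧ Dense G := by
  classical
  refine ⟨{X : ↥(closure Tprime) | ∀ N : ℕ, ∃ n : ℕ, N < n ∧
      (n : ℝ) ≤ (X.1.complexity n : ℝ) ∧ (X.1.complexity n : ℝ) ≤ (n : ℝ) + h n},
    fun _ hx => hx, ?_, ?_⟩
  · -- Gδ
    have hGd : ∀ N : ℕ, IsOpen {X : Subshift | ∃ n : ℕ, N < n ∧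
        (n : ℝ) ≤ (X.complexity n : ℝ) ∧ (X.complexity n : ℝ) ≤ (n : ℝ) + h n} := by
      intro N
      rw [isOpen_iff_forall_mem_open]
      rintro X ⟨n, hn1, hn2, hn3⟩
      refine ⟨cylinder X n, ?_, isOpen_cylinder X n, rfl⟩
      intro Y hY
      have hc := complexity_congr (show Y.lang n = X.lang n from hY)
      exact ⟨n, hn1, by rw [hc]; exact hn2, by rw [hc]; exact hn3⟩
    have heq : {X : ↥(closure Tprime) | ∀ N : ℕ, ∃ n : ℕ, N < n ∧
        (n : ℝ) ≤ (X.1.complexity n : ℝ) ∧ (X.1.complexity n : ℝ) ≤ (n : ℝ) + h n} =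
        ⋂ N : ℕ, (Subtype.val ⁻¹' {X : Subshift | ∃ n : ℕ, N < n ∧
          (n : ℝ) ≤ (X.complexity n : ℝ) ∧ (X.complexity n : ℝ) ≤ (n : ℝ) + h n}) := by
      ext X
      simp only [Set.mem_setOf_eq, Set.mem_iInter, Set.mem_preimage]
    rw [heq]
    exact IsGδ.iInter fun N => ((hGd N).preimage continuous_subtype_val).isGδ
  · -- dense
    rw [dense_iff_inter_open]
    rintro U hUopen ⟨⟨X, hXc⟩, hXU⟩
    obtain ⟨V, hVopen, hVeq⟩ := isOpen_induced_iff.1 hUopen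
    have hXV : X ∈ V := by rw [← hVeq] at hXU; exact hXU
    obtain ⟨n₀, hcyl⟩ := exists_cylinder_subset hVopen X hXV
    have hcyl' : cylinder X (n₀+1) ⊆ V :=
      fun Y hY => hcyl (cylinder_antitone X (Nat.le_succ n₀) hY)
    obtain ⟨Z, hZcyl, hZT⟩ :=
      mem_closure_iff.1 hXc _ (isOpen_cylinder X (n₀+1)) rfl
    obtain ⟨Y, hYtr, hYinf, hYlang, C, hYc⟩ := construction Z hZT.1 hZT.2 n₀
    have hYT : Y ∈ Tprime := ⟨hYtr, hYinf⟩
    refine ⟨⟨Y, subset_closure hYT⟩, ?_, ?_⟩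
    · rw [← hVeq]
      apply hcyl'
      show Y.lang (n₀+1) = X.lang (n₀+1)
      rw [hYlang]
      exact hZcyl
    · intro N
      have SMy := Y.complexity_strictMono hYinf
      obtain ⟨Mb, hMb⟩ := eventually_atTop.1 (hunb.eventually_ge_atTop (C:ℝ))
      refine ⟨max Mb N + 1, by omega, ?_, ?_⟩
      · exact_mod_cast SMy.le_apply
      · have h1 : Y.complexity (max Mb N + 1) ≤ (max Mb N + 1) + C := hYc _
        have h2 : (C:ℝ) ≤ h (max Mb N + 1) := hMb _ (by omega)
        have h3 : (Y.complexity (max Mb N + 1) : ℝ) ≤ ((max Mb N + 1 : ℕ) : ℝ) + C := by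
          exact_mod_cast h1
        linarith

end Generic
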